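/- The congruence Cg^{B_n}(a, 0) is an atom in the congruence lattice of B_n: for any u ≠ v in B_n with (u,v) ∈ Cg^{B_n}(a,0), we have Cg^{B_n}(a,0) ⊆ Cg^{B_n}(u,v). (The key step: the projection of B_n to its first coordinate equals {0, D}, and for any such u, v we get {u ∧ a, v ∧ a} = {0, a}.) -/

import Mathlib

/-- The three-element set `M = {0, D, ∂D}`. -/
inductive Mc : Type
  | z : Mc
  | D : Mc
  | pD : Mc
deriving DecidableEq

/-- The fixed-point-free involution `∂` exchanging `D` and `∂D`
(its value on `0` is irrelevant to the operations below). -/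
def pd : Mc → Mc
  | Mc.D => Mc.pD
  | Mc.pD => Mc.D
  | Mc.z => Mc.z

/-- Height-1 meet on `M`: `x ∧ y = x` if `x = y`, else `0`. -/
def mmt (x y : Mc) : Mc := if x = y then x else Mc.z

/-- `J(x,y,w) = x` if `x = y`; `x ∧ w` if `x = ∂y`; `0` otherwise. -/
def mJ (x y w : Mc) : Mc := if x = y then x else if x = pd y then mmt x w else Mc.z

/-- `J'(x,y,w) = x ∧ w` if `x = y`; `x` if `x = ∂y`; `0` otherwise. -/
def mJ' (x y w : Mc) : Mc := if x = y then mmt x w else if x = pd y then x else Mc.z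

/-- Pointwise meet on `M^n`. -/
def vmt {n : ℕ} (x y : Fin n → Mc) : Fin n → Mc := fun l => mmt (x l) (y l)

/-- Pointwise `J` on `M^n`. -/
def vJ {n : ℕ} (x y w : Fin n → Mc) : Fin n → Mc := fun l => mJ (x l) (y l) (w l)

/-- Pointwise `J'` on `M^n`. -/
def vJ' {n : ℕ} (x y w : Fin n → Mc) : Fin n → Mc := fun l => mJ' (x l) (y l) (w l)

/-- The zero tuple in `M^n`. -/
def vz (n : ℕ) : Fin n → Mc := fun _ => Mc.z

/-- `b_i`: `D` in (1-indexed) coordinates `1..i`, `0` afterwards. -/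
def vb (n i : ℕ) : Fin n → Mc := fun l => if l.val < i then Mc.D else Mc.z

/-- `d_i`: `D` in coordinates `1..i-1`, `∂D` in coordinate `i`, `0` afterwards. -/
def vd (n i : ℕ) : Fin n → Mc := fun l =>
  if l.val + 1 < i then Mc.D else if l.val + 1 = i then Mc.pD else Mc.z

/-- `c_i`: `0` in coordinate `1`, `D` in coordinates `2..i`, `0` afterwards. -/
def vc (n i : ℕ) : Fin n → Mc := fun l =>
  if l.val = 0 then Mc.z else if l.val < i then Mc.D else Mc.z

/-- `a = b_1 = (D,0,…,0)`. -/
def va (n : ℕ) : Fin n → Mc := vb n 1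

/-- The subuniverse `B_n` of `M^n`, generated by `{a} ∪ {b_i, d_i : 2 ≤ i ≤ n}`
under the pointwise operations `∧`, `J`, `J'`. -/
inductive Bn (n : ℕ) : (Fin n → Mc) → Prop
  | gen_a : Bn n (va n)
  | gen_b (i : ℕ) (h2 : 2 ≤ i) (hn : i ≤ n) : Bn n (vb n i)
  | gen_d (i : ℕ) (h2 : 2 ≤ i) (hn : i ≤ n) : Bn n (vd n i)
  | cmt {x y} : Bn n x → Bn n y → Bn n (vmt x y)
  | cJ {x y w} : Bn n x → Bn n y → Bn n w → Bn n (vJ x y w)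
  | cJ' {x y w} : Bn n x → Bn n y → Bn n w → Bn n (vJ' x y w)

/-- The congruence of the algebra with universe `C` (a subuniverse of `M^n`) generated by the
pair `(a, b)`: the smallest equivalence relation on `C` containing `(a,b)` and compatible with
the operations `∧`, `J`, `J'`. -/
inductive CgC {n : ℕ} (C : (Fin n → Mc) → Prop) (a b : Fin n → Mc) :
    (Fin n → Mc) → (Fin n → Mc) → Prop
  | base : CgC C a b a b
  | refl {x} (hx : C x) : CgC C a b x x
  | symm {x y} : CgC C a b x y → CgC C a b y x
  | trans {x y z} : CgC C a b x y → CgC C a b y z → CgC C a b x z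
  | cmt {x x' y y'} : CgC C a b x x' → CgC C a b y y' → CgC C a b (vmt x y) (vmt x' y')
  | cJ {x x' y y' w w'} : CgC C a b x x' → CgC C a b y y' → CgC C a b w w' →
      CgC C a b (vJ x y w) (vJ x' y' w')
  | cJ' {x x' y y' w w'} : CgC C a b x x' → CgC C a b y y' → CgC C a b w w' →
      CgC C a b (vJ' x y w) (vJ' x' y' w')

/-- Unary polynomials of the algebra with universe `C`: functions built by composition from
the operations `∧`, `J`, `J'`, constants from `C`, and the identity. -/
inductive PolyC {n : ℕ} (C : (Fin n → Mc) → Prop) : ((Fin n → Mc) → (Fin n → Mc)) → Prop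
  | id : PolyC C id
  | const {c} (h : C c) : PolyC C (fun _ => c)
  | pmt {f g} : PolyC C f → PolyC C g → PolyC C (fun x => vmt (f x) (g x))
  | pJ {f g h} : PolyC C f → PolyC C g → PolyC C h → PolyC C (fun x => vJ (f x) (g x) (h x))
  | pJ' {f g h} : PolyC C f → PolyC C g → PolyC C h → PolyC C (fun x => vJ' (f x) (g x) (h x))

/-- Fundamental translations of the algebra with universe `C`: unary polynomials obtained from
one of the operations `∧`, `J`, `J'` by fixing all but one argument at constants from `C`. -/
inductive FT {n : ℕ} (C : (Fin n → Mc) → Prop) : ((Fin n → Mc) → (Fin n → Mc)) → Prop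
  | mtL {c} (h : C c) : FT C (fun x => vmt x c)
  | mtR {c} (h : C c) : FT C (fun x => vmt c x)
  | J1 {c d} (hc : C c) (hd : C d) : FT C (fun x => vJ x c d)
  | J2 {c d} (hc : C c) (hd : C d) : FT C (fun x => vJ c x d)
  | J3 {c d} (hc : C c) (hd : C d) : FT C (fun x => vJ c d x)
  | J'1 {c d} (hc : C c) (hd : C d) : FT C (fun x => vJ' x c d)
  | J'2 {c d} (hc : C c) (hd : C d) : FT C (fun x => vJ' c x d)
  | J'3 {c d} (hc : C c) (hd : C d) : FT C (fun x => vJ' c d x)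

/-- The support of a tuple: the set of coordinates where it is nonzero. -/
def suppF {n : ℕ} (x : Fin n → Mc) : Finset (Fin n) :=
  Finset.univ.filter (fun l => x l ≠ Mc.z)

instance : Fintype Mc := ⟨{Mc.z, Mc.D, Mc.pD}, fun x => by cases x <;> simp⟩

lemma mmt_zd : ∀ x y : Mc, (x = Mc.z ∨ x = Mc.D) → (y = Mc.z ∨ y = Mc.D) →
    (mmt x y = Mc.z ∨ mmt x y = Mc.D) := by decide

lemma mJ_zd : ∀ x y w : Mc, (x = Mc.z ∨ x = Mc.D) →
    (mJ x y w = Mc.z ∨ mJ x y w = Mc.D) := by decide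

lemma mJ'_zd : ∀ x y w : Mc, (x = Mc.z ∨ x = Mc.D) →
    (mJ' x y w = Mc.z ∨ mJ' x y w = Mc.D) := by decide

lemma mmt_z_right : ∀ x : Mc, mmt x Mc.z = Mc.z := by decide

lemma mmt_z_left : ∀ x : Mc, mmt Mc.z x = Mc.z := by decide

/-- First coordinate of any element of `B_n` is `0` or `D`. -/
lemma Bn_zero {n : ℕ} (x : Fin n → Mc) (hx : Bn n x) (l : Fin n) (hl : l.val = 0) :
    x l = Mc.z ∨ x l = Mc.D := by
  induction hx with
  | gen_a => right; simp [va, vb, hl]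
  | gen_b i h2 hni => right; simp only [vb, hl]; rw [if_pos (by omega)]
  | gen_d i h2 hni => right; simp only [vd, hl]; rw [if_pos (by omega)]
  | cmt hx hy ihx ihy => exact mmt_zd _ _ ihx ihy
  | cJ hx hy hw ihx ihy ihw => exact mJ_zd _ _ _ ihx
  | cJ' hx hy hw ihx ihy ihw => exact mJ'_zd _ _ _ ihx

/-- Pairs in `Cg(a,0)` agree away from coordinate `0`. -/
lemma cg_off {n : ℕ} {x y : Fin n → Mc} (h : CgC (Bn n) (va n) (vz n) x y) :
    ∀ l : Fin n, l.val ≠ 0 → x l = y l := by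
  induction h with
  | base => intro l hl; show va n l = vz n l; simp only [va, vb, vz]; rw [if_neg (by omega)]
  | refl hx => intro l _; rfl
  | symm h ih => intro l hl; exact (ih l hl).symm
  | trans h1 h2 ih1 ih2 => intro l hl; exact (ih1 l hl).trans (ih2 l hl)
  | cmt h1 h2 ih1 ih2 => intro l hl; show mmt _ _ = mmt _ _; rw [ih1 l hl, ih2 l hl]
  | cJ h1 h2 h3 ih1 ih2 ih3 =>
      intro l hl; show mJ _ _ _ = mJ _ _ _; rw [ih1 l hl, ih2 l hl, ih3 l hl]
  | cJ' h1 h2 h3 ih1 ih2 ih3 =>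
      intro l hl; show mJ' _ _ _ = mJ' _ _ _; rw [ih1 l hl, ih2 l hl, ih3 l hl]

/-- Monotonicity: if `(a,b) ∈ Cg(u,v)` then `Cg(a,b) ⊆ Cg(u,v)`. -/
lemma cg_mono {n : ℕ} {C : (Fin n → Mc) → Prop} {a b u v x y : Fin n → Mc}
    (h : CgC C a b x y) (hab : CgC C u v a b) : CgC C u v x y := by
  induction h with
  | base => exact hab
  | refl hx => exact CgC.refl hx
  | symm h ih => exact ih.symm
  | trans h1 h2 ih1 ih2 => exact ih1.trans ih2
  | cmt h1 h2 ih1 ih2 => exact CgC.cmt ih1 ih2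
  | cJ h1 h2 h3 ih1 ih2 ih3 => exact CgC.cJ ih1 ih2 ih3
  | cJ' h1 h2 h3 ih1 ih2 ih3 => exact CgC.cJ' ih1 ih2 ih3

lemma vmt_va_D {n : ℕ} (u : Fin n → Mc) (l0 : Fin n) (hl0 : l0.val = 0)
    (h : u l0 = Mc.D) : vmt u (va n) = va n := by
  funext l
  show mmt (u l) (va n l) = va n l
  by_cases hl : l.val = 0
  · have hll : l = l0 := Fin.ext (by omega)
    have hva : va n l = Mc.D := by simp only [va, vb]; rw [if_pos (by omega)]
    rw [hva, hll, h]; rfl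
  · have hva : va n l = Mc.z := by simp only [va, vb]; rw [if_neg (by omega)]
    rw [hva, mmt_z_right]

lemma vmt_va_z {n : ℕ} (u : Fin n → Mc) (l0 : Fin n) (hl0 : l0.val = 0)
    (h : u l0 = Mc.z) : vmt u (va n) = vz n := by
  funext l
  show mmt (u l) (va n l) = Mc.z
  by_cases hl : l.val = 0
  · have hll : l = l0 := Fin.ext (by omega)
    rw [hll, h, mmt_z_left]
  · have hva : va n l = Mc.z := by simp only [va, vb]; rw [if_neg (by omega)]
    rw [hva, mmt_z_right]

/-- `Cg^{B_n}(a,0)` is an atom in the congruence lattice of `B_n`: for any `u ≠ v` in `B_n`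
with `(u,v) ∈ Cg^{B_n}(a,0)`, we have `Cg^{B_n}(a,0) ⊆ Cg^{B_n}(u,v)`. -/
theorem Cg_a_zero_atomic {n : ℕ} (hn : 2 ≤ n) :
    ∀ u v : Fin n → Mc, Bn n u → Bn n v → u ≠ v →
      CgC (Bn n) (va n) (vz n) u v →
      ∀ x y : Fin n → Mc, CgC (Bn n) (va n) (vz n) x y → CgC (Bn n) u v x y := by
  intro u v hu hv hne huv x y hxy
  have hn0 : 0 < n := by omega
  set l0 : Fin n := ⟨0, hn0⟩ with hl0def
  have hagree : ∀ l : Fin n, l.val ≠ 0 → u l = v l := cg_off huv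
  have hne0 : u l0 ≠ v l0 := by
    intro h
    apply hne
    funext l
    by_cases hl : l.val = 0
    · have : l = l0 := Fin.ext hl
      rw [this]; exact h
    · exact hagree l hl
  have hu0 := Bn_zero u hu l0 rfl
  have hv0 := Bn_zero v hv l0 rfl
  have base : CgC (Bn n) u v (vmt u (va n)) (vmt v (va n)) :=
    CgC.cmt CgC.base (CgC.refl Bn.gen_a)
  have key : CgC (Bn n) u v (va n) (vz n) := by
    rcases hu0 with hu0 | hu0 <;> rcases hv0 with hv0 | hv0
    · exact absurd (hu0.trans hv0.symm) hne0
    · rw [vmt_va_z u l0 rfl hu0, vmt_va_D v l0 rfl hv0] at base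
      exact base.symm
    · rw [vmt_va_D u l0 rfl hu0, vmt_va_z v l0 rfl hv0] at base
      exact base
    · exact absurd (hu0.trans hv0.symm) hne0
  exact cg_mono hxy key
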